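/- For every fixed positive integer k, as n → ∞ the total number of parking completions over all k-element subsets of occupied spots satisfies Σ_{1 ≤ i_1 < … < i_k ≤ n} |PC_n((i_1,…,i_k))| ~ (n+1)^(n−k) · n^(k−1) / k!, i.e., the ratio of the left side to (n+1)^(n−k) n^(k−1)/k! tends to 1. -/

import Mathlib

open Finset

/-- One-way-street parking process on spots `{1,…,n}`: given already occupied spots `occ` and a
list of preferences, each car parks in the first unoccupied spot `≥` its preference; returns the
final occupied set if all cars park, `none` otherwise. -/
def park (n : ℕ) (occ : Finset ℕ) : List ℕ → Option (Finset ℕ)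
  | [] => some occ
  | p :: rest =>
    let avail := (Finset.Icc p n) \ occ
    if h : avail.Nonempty then park n (insert (avail.min' h) occ) rest
    else none

/-- The set of parking completions of the occupied spots `v = (v 0, …, v (ℓ-1)) ∈ [n]^ℓ`:
preference sequences of length `n - ℓ` (encoded 0-indexed, coordinate value `i` meaning
preference `i+1`) for which all remaining cars park. -/
def PC (n : ℕ) {ℓ : ℕ} (v : Fin ℓ → ℕ) : Finset (Fin (n - ℓ) → Fin n) :=
  Finset.univ.filter
    (fun π => (park n (Finset.univ.image v) (List.ofFn (fun i => (π i : ℕ) + 1))).isSome)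


open Classical in
/-- next free spot on the circle `ZMod m` at or (cyclically) after `p`. -/
noncomputable def nextFree (m : ℕ) (occ : Finset (ZMod m)) (p : ZMod m) : ZMod m :=
  if h : ∃ d : ℕ, p + (d : ZMod m) ∉ occ then p + ((Nat.find h : ℕ) : ZMod m) else p

/-- circular parking: all cars always park (junk behavior if board full). -/
noncomputable def parkC (m : ℕ) : Finset (ZMod m) → List (ZMod m) → Finset (ZMod m)
  | occ, [] => occ
  | occ, p :: l => parkC m (insert (nextFree m occ p) occ) l

@[simp] lemma parkC_nil (m : ℕ) (occ : Finset (ZMod m)) : parkC m occ [] = occ := rfl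

@[simp] lemma parkC_cons (m : ℕ) (occ : Finset (ZMod m)) (p : ZMod m) (l : List (ZMod m)) :
    parkC m occ (p :: l) = parkC m (insert (nextFree m occ p) occ) l := rfl

lemma nextFree_eq (m : ℕ) (occ : Finset (ZMod m)) (p : ZMod m) (d0 : ℕ)
    (h1 : p + (d0 : ZMod m) ∉ occ) (h2 : ∀ d < d0, p + (d : ZMod m) ∈ occ) :
    nextFree m occ p = p + (d0 : ZMod m) := by
  classical
  have hex : ∃ d : ℕ, p + (d : ZMod m) ∉ occ := ⟨d0, h1⟩
  simp only [nextFree]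
  rw [dif_pos hex]
  congr 2
  rw [Nat.find_eq_iff]
  exact ⟨h1, fun d hd => not_not_intro (h2 d hd)⟩

lemma nextFree_not_mem (m : ℕ) [NeZero m] (occ : Finset (ZMod m)) (p : ZMod m)
    (h : occ ≠ Finset.univ) : nextFree m occ p ∉ occ := by
  classical
  obtain ⟨q, hq⟩ : ∃ q, q ∉ occ := by
    by_contra hc
    push_neg at hc
    exact h (Finset.eq_univ_iff_forall.2 hc)
  have hex : ∃ d : ℕ, p + (d : ZMod m) ∉ occ := by
    refine ⟨(q - p).val, ?_⟩
    have h2 : ((((q - p).val : ℕ)) : ZMod m) = q - p := by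
      simp [ZMod.natCast_val, ZMod.cast_id]
    rw [h2]
    simpa using hq
  simp only [nextFree]
  rw [dif_pos hex]
  exact Nat.find_spec hex

lemma mem_parkC_of_mem (m : ℕ) {x : ZMod m} (l : List (ZMod m)) (occ : Finset (ZMod m))
    (hx : x ∈ occ) : x ∈ parkC m occ l := by
  induction l generalizing occ with
  | nil => simpa
  | cons p l ih => exact ih _ (Finset.mem_insert_of_mem hx)

lemma zero_mem_parkC (m : ℕ) (l : List (ZMod m)) (occ : Finset (ZMod m))
    (h : 0 ∈ occ ∨ (0 : ZMod m) ∈ l) : (0 : ZMod m) ∈ parkC m occ l := by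
  induction l generalizing occ with
  | nil => simpa using h.resolve_right (by simp)
  | cons p l ih =>
    rcases h with h | h
    · rw [parkC_cons]
      exact mem_parkC_of_mem m l _ (Finset.mem_insert_of_mem h)
    · rcases List.mem_cons.1 h with rfl | h
      · by_cases h0 : (0 : ZMod m) ∈ occ
        · rw [parkC_cons]
          exact mem_parkC_of_mem m l _ (Finset.mem_insert_of_mem h0)
        · have he : nextFree m occ 0 = 0 := by
            have := nextFree_eq m occ 0 0 (by simpa using h0) (by omega)
            simpa using this
          rw [parkC_cons, he]
          exact mem_parkC_of_mem m _ _ (Finset.mem_insert_self _ _)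
      · exact ih _ (Or.inr h)

lemma card_parkC (m : ℕ) [NeZero m] (l : List (ZMod m)) (occ : Finset (ZMod m))
    (h : occ.card + l.length < m) : (parkC m occ l).card = occ.card + l.length := by
  induction l generalizing occ with
  | nil => simp
  | cons p l ih =>
    have hne : occ ≠ Finset.univ := by
      intro he
      have hc : occ.card = m := by rw [he]; simp [ZMod.card]
      rw [hc] at h; omega
    have hnm := nextFree_not_mem m occ p hne
    have hcard : (insert (nextFree m occ p) occ).card = occ.card + 1 :=
      Finset.card_insert_of_notMem hnm
    have hrec := ih (insert (nextFree m occ p) occ) (by rw [hcard]; simp at h ⊢; omega)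
    rw [parkC_cons, hrec, hcard]
    simp only [List.length_cons]; omega

lemma nextFree_rot (m : ℕ) (occ : Finset (ZMod m)) (p t : ZMod m) :
    nextFree m (occ.image (· + t)) (p + t) = nextFree m occ p + t := by
  classical
  have key : ∀ d : ℕ, p + t + (d : ZMod m) ∉ occ.image (· + t) ↔ p + (d : ZMod m) ∉ occ := by
    intro d
    rw [not_iff_not]
    constructor
    · rintro hm
      obtain ⟨y, hy, he⟩ := Finset.mem_image.1 hm
      have hy2 : y = p + d := by
        have : y + t = p + d + t := by rw [he]; ring
        exact add_right_cancel this
      rwa [← hy2]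
    · intro hm
      exact Finset.mem_image.2 ⟨p + d, hm, by ring⟩
  by_cases hex : ∃ d : ℕ, p + (d : ZMod m) ∉ occ
  · obtain ⟨d0, h1⟩ := hex
    have hex : ∃ d : ℕ, p + (d : ZMod m) ∉ occ := ⟨d0, h1⟩
    have hspec := Nat.find_spec hex
    set dd := Nat.find hex with hdd
    have hmin : ∀ d < dd, p + (d : ZMod m) ∈ occ := fun d hd => by
      have := Nat.find_min hex (by omega : d < dd)
      simpa using this
    have hNF : nextFree m occ p = p + (dd : ZMod m) := nextFree_eq m occ p dd hspec hmin
    have hNF2 : nextFree m (occ.image (· + t)) (p + t) = p + t + (dd : ZMod m) :=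
      nextFree_eq m _ _ dd ((key dd).2 hspec) (fun d hd => by
        by_contra hc
        exact ((key d).1 hc) (hmin d hd))
    rw [hNF, hNF2]; ring
  · have hex2 : ¬ ∃ d : ℕ, p + t + (d : ZMod m) ∉ occ.image (· + t) := by
      rintro ⟨d, hd⟩
      exact hex ⟨d, (key d).1 hd⟩
    simp only [nextFree]
    rw [dif_neg hex2, dif_neg hex]

lemma parkC_rot (m : ℕ) (t : ZMod m) (l : List (ZMod m)) (occ : Finset (ZMod m)) :
    parkC m (occ.image (· + t)) (l.map (· + t)) = (parkC m occ l).image (· + t) := by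
  induction l generalizing occ with
  | nil => simp
  | cons p l ih =>
    simp only [List.map_cons, parkC_cons]
    rw [nextFree_rot]
    simpa [Finset.image_insert] using ih (insert (nextFree m occ p) occ)
open Finset


-- cast membership helper
lemma mem_image_cast (n : ℕ) (occ : Finset ℕ) (hocc : ∀ x ∈ occ, x ≤ n) (a : ℕ) (ha : a ≤ n) :
    (a : ZMod (n+1)) ∈ occ.image (fun x : ℕ => (x : ZMod (n+1))) ↔ a ∈ occ := by
  constructor
  · rintro hm
    obtain ⟨y, hy, he⟩ := Finset.mem_image.1 hm
    have h1 : ((y : ZMod (n+1))).val = y := ZMod.val_cast_of_lt (by have := hocc y hy; omega)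
    have h2 : ((a : ZMod (n+1))).val = a := ZMod.val_cast_of_lt (by omega)
    have : y = a := by rw [← h1, ← h2, he]
    rwa [← this]
  · intro hm
    exact Finset.mem_image.2 ⟨a, hm, rfl⟩


lemma park_isSome_iff (n : ℕ) (l : List ℕ) (occ : Finset ℕ)
    (hocc : ∀ x ∈ occ, 1 ≤ x ∧ x ≤ n) (hl : ∀ p ∈ l, 1 ≤ p ∧ p ≤ n) :
    (park n occ l).isSome = true ↔
      (0 : ZMod (n+1)) ∉ parkC (n+1) (occ.image (fun x : ℕ => (x : ZMod (n+1))))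
        (l.map (fun x : ℕ => (x : ZMod (n+1)))) := by
  induction l generalizing occ with
  | nil =>
    simp only [park, parkC_nil, List.map_nil, Option.isSome_some, true_iff]
    intro hm
    obtain ⟨y, hy, he⟩ := Finset.mem_image.1 hm
    have h1 : ((y : ZMod (n+1))).val = y := ZMod.val_cast_of_lt (by have := hocc y hy; omega)
    have := (hocc y hy).1
    rw [he] at h1
    simp [ZMod.val_zero] at h1
    omega
  | cons p rest ih =>
    have hp := hl p List.mem_cons_self
    have hocc' : ∀ x ∈ occ, x ≤ n := fun x hx => (hocc x hx).2
    by_cases h : ((Finset.Icc p n) \ occ).Nonempty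
    · set q := ((Finset.Icc p n) \ occ).min' h with hq
      have hqmem : q ∈ (Finset.Icc p n) \ occ := Finset.min'_mem _ h
      have hq1 : p ≤ q ∧ q ≤ n := by
        have := (Finset.mem_sdiff.1 hqmem).1
        simp only [Finset.mem_Icc] at this
        exact this
      have hqocc : q ∉ occ := (Finset.mem_sdiff.1 hqmem).2
      have hnf : nextFree (n+1) (occ.image (fun x : ℕ => (x : ZMod (n+1)))) (p : ZMod (n+1))
          = (q : ZMod (n+1)) := by
        have e1 : nextFree (n+1) (occ.image (fun x : ℕ => (x : ZMod (n+1)))) (p : ZMod (n+1))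
            = (p : ZMod (n+1)) + ((q - p : ℕ) : ZMod (n+1)) := by
          apply nextFree_eq
          · rw [← Nat.cast_add]
            have : p + (q - p) = q := by omega
            rw [this]
            rw [mem_image_cast n occ hocc' q hq1.2]
            exact hqocc
          · intro d hd
            rw [← Nat.cast_add]
            rw [mem_image_cast n occ hocc' (p + d) (by omega)]
            by_contra hc
            have hmem : p + d ∈ (Finset.Icc p n) \ occ := by
              simp only [Finset.mem_sdiff, Finset.mem_Icc]
              exact ⟨⟨by omega, by omega⟩, hc⟩
            have := Finset.min'_le _ _ hmem
            omega
        rw [e1, ← Nat.cast_add]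
        congr 1
        omega
      have hstep : park n occ (p :: rest) = park n (insert q occ) rest := by
        simp only [park]
        rw [dif_pos h]
      rw [hstep]
      have himg : (insert q occ).image (fun x : ℕ => (x : ZMod (n+1)))
          = insert ((q : ZMod (n+1))) (occ.image (fun x : ℕ => (x : ZMod (n+1)))) :=
        Finset.image_insert _ _ _
      rw [List.map_cons, parkC_cons, hnf, ← himg]
      exact ih (insert q occ) (by
        intro x hx
        rcases Finset.mem_insert.1 hx with rfl | hx
        · exact ⟨by omega, hq1.2⟩
        · exact hocc x hx) (fun x hx => hl x (List.mem_cons_of_mem _ hx))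
    · have hstep : park n occ (p :: rest) = none := by
        simp only [park]
        rw [dif_neg h]
      rw [hstep]
      simp only [Option.isSome_none, false_iff, not_not, Bool.false_eq_true]
      have hfull : ∀ x, p ≤ x → x ≤ n → x ∈ occ := by
        intro x h1 h2
        by_contra hc
        exact h ⟨x, by simp only [Finset.mem_sdiff, Finset.mem_Icc]; exact ⟨⟨h1, h2⟩, hc⟩⟩
      have hnf : nextFree (n+1) (occ.image (fun x : ℕ => (x : ZMod (n+1)))) (p : ZMod (n+1))
          = 0 := by
        have e1 : nextFree (n+1) (occ.image (fun x : ℕ => (x : ZMod (n+1)))) (p : ZMod (n+1))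
            = (p : ZMod (n+1)) + ((n + 1 - p : ℕ) : ZMod (n+1)) := by
          apply nextFree_eq
          · rw [← Nat.cast_add]
            have : p + (n + 1 - p) = n + 1 := by omega
            rw [this]
            intro hm
            obtain ⟨y, hy, he⟩ := Finset.mem_image.1 hm
            have h1 : ((y : ZMod (n+1))).val = y := ZMod.val_cast_of_lt (by have := hocc' y hy; omega)
            rw [he] at h1
            simp at h1
            have := (hocc y hy).1
            omega
          · intro d hd
            rw [← Nat.cast_add]
            rw [mem_image_cast n occ hocc' (p + d) (by omega)]
            exact hfull _ (by omega) (by omega)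
        rw [e1, ← Nat.cast_add]
        have : ((p + (n + 1 - p) : ℕ) : ZMod (n+1)) = ((n + 1 : ℕ) : ZMod (n+1)) := by
          congr 1; omega
        rw [this]
        simp
      rw [List.map_cons, parkC_cons, hnf]
      exact zero_mem_parkC _ _ _ (Or.inl (Finset.mem_insert_self _ _))

noncomputable def emptyOf (m r : ℕ) [NeZero m] (S : Finset (ZMod m)) (π : Fin r → ZMod m) : ZMod m :=
  ∑ x ∈ (parkC m S (List.ofFn π))ᶜ, x

lemma compl_parkC_eq (m r : ℕ) [NeZero m] (S : Finset (ZMod m)) (π : Fin r → ZMod m)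
    (h : S.card + r + 1 = m) :
    (parkC m S (List.ofFn π))ᶜ = {emptyOf m r S π} := by
  have hcard : (parkC m S (List.ofFn π)).card = S.card + r := by
    have := card_parkC m (List.ofFn π) S (by rw [List.length_ofFn]; omega)
    rwa [List.length_ofFn] at this
  have hcompl : ((parkC m S (List.ofFn π))ᶜ).card = 1 := by
    rw [Finset.card_compl, hcard]
    have : Fintype.card (ZMod m) = m := ZMod.card m
    omega
  obtain ⟨a, ha⟩ := Finset.card_eq_one.1 hcompl
  rw [ha]
  congr 1
  simp [emptyOf, ha]

lemma emptyOf_rot (m r : ℕ) [NeZero m] (S : Finset (ZMod m)) (π : Fin r → ZMod m) (t : ZMod m)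
    (h : S.card + r + 1 = m) :
    emptyOf m r (S.image (· + t)) (fun j => π j + t) = emptyOf m r S π + t := by
  have hpark : parkC m (S.image (· + t)) (List.ofFn (fun j => π j + t))
      = (parkC m S (List.ofFn π)).image (· + t) := by
    rw [← parkC_rot, List.map_ofFn]
    rfl
  have hinj : Function.Injective (· + t : ZMod m → ZMod m) := add_left_injective t
  have h1 := compl_parkC_eq m r S π h
  have h2 := compl_parkC_eq m r (S.image (· + t)) (fun j => π j + t) (by
    rw [Finset.card_image_of_injective _ hinj]; exact h)
  have hne : emptyOf m r S π ∉ parkC m S (List.ofFn π) := by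
    rw [← Finset.mem_compl, h1]; exact Finset.mem_singleton_self _
  have hmem : emptyOf m r S π + t ∈ (parkC m (S.image (· + t)) (List.ofFn (fun j => π j + t)))ᶜ := by
    rw [Finset.mem_compl, hpark]
    intro hc
    obtain ⟨z, hz, he⟩ := Finset.mem_image.1 hc
    have : z = emptyOf m r S π := add_right_cancel he
    rw [this] at hz
    exact hne hz
  rw [h2, Finset.mem_singleton] at hmem
  exact hmem.symm

lemma image_add_neg_cancel {m : ℕ} (S : Finset (ZMod m)) (t : ZMod m) :
    (S.image (· + t)).image (· + (-t)) = S := by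
  rw [Finset.image_image]
  have h : ((· + (-t)) ∘ (· + t) : ZMod m → ZMod m) = id := by funext x; simp
  rw [h, Finset.image_id]

lemma image_neg_add_cancel {m : ℕ} (S : Finset (ZMod m)) (t : ZMod m) :
    (S.image (· + (-t))).image (· + t) = S := by
  rw [Finset.image_image]
  have h : ((· + t) ∘ (· + (-t)) : ZMod m → ZMod m) = id := by funext x; simp
  rw [h, Finset.image_id]

open Classical in
lemma rot_count (n k : ℕ) (hkn : k ≤ n) :
    ((n+1).choose k) * (n+1)^(n-k)
      = (n+1) * (((Finset.powersetCard k (Finset.univ : Finset (ZMod (n+1)))) ×ˢ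
            (Finset.univ : Finset (Fin (n-k) → ZMod (n+1)))).filter
          (fun Sπ => (0 : ZMod (n+1)) ∉ parkC (n+1) Sπ.1 (List.ofFn Sπ.2))).card := by
  classical
  set m := n + 1 with hm
  set r := n - k with hr
  set full := (Finset.powersetCard k (Finset.univ : Finset (ZMod m))) ×ˢ
      (Finset.univ : Finset (Fin r → ZMod m)) with hfull
  set T2 := full.filter (fun Sπ => (0 : ZMod m) ∉ parkC m Sπ.1 (List.ofFn Sπ.2)) with hT2
  have hcard_full : full.card = ((n+1).choose k) * (n+1)^(n-k) := by
    rw [hfull, Finset.card_product, Finset.card_powersetCard, Finset.card_univ, Finset.card_univ,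
      ZMod.card, Fintype.card_fun, ZMod.card, Fintype.card_fin]
  -- the bijection
  have hbij : ((Finset.univ : Finset (ZMod m)) ×ˢ T2).card = full.card := by
    refine Finset.card_bij'
      (fun a _ => (a.2.1.image (· + a.1), fun j => a.2.2 j + a.1))
      (fun b _ => (emptyOf m r b.1 b.2,
        (b.1.image (· + (- emptyOf m r b.1 b.2)), fun i => b.2 i + (- emptyOf m r b.1 b.2))))
      ?_ ?_ ?_ ?_
    · -- hi : lands in full
      rintro ⟨t, S, π⟩ ha
      simp only [Finset.mem_product, Finset.mem_univ, true_and, and_true] at ha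
      rw [hT2, Finset.mem_filter, hfull, Finset.mem_product] at ha
      obtain ⟨⟨hS, -⟩, -⟩ := ha
      rw [Finset.mem_powersetCard_univ] at hS
      rw [hfull, Finset.mem_product, Finset.mem_powersetCard_univ]
      refine ⟨?_, Finset.mem_univ _⟩
      rw [Finset.card_image_of_injective _ (add_left_injective t)]
      exact hS
    · -- hj : lands in univ ×ˢ T2
      rintro ⟨S, π⟩ hb
      simp only [hfull, Finset.mem_product, Finset.mem_univ, and_true, true_and] at hb
      rw [Finset.mem_powersetCard_univ] at hb
      have hdim : S.card + r + 1 = m := by rw [hb, hm, hr]; omega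
      set e := emptyOf m r S π with he
      simp only [Finset.mem_product, Finset.mem_univ, true_and]
      rw [hT2, Finset.mem_filter]
      constructor
      · rw [hfull, Finset.mem_product, Finset.mem_powersetCard_univ]
        refine ⟨?_, Finset.mem_univ _⟩
        rw [Finset.card_image_of_injective _ (add_left_injective _), hb]
      · have hpark : parkC m (S.image (· + (-e))) (List.ofFn (fun i => π i + (-e)))
            = (parkC m S (List.ofFn π)).image (· + (-e)) := by
          rw [← parkC_rot, List.map_ofFn]; rfl
        rw [hpark]
        intro hc
        obtain ⟨z, hz, hze⟩ := Finset.mem_image.1 hc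
        have hz2 : z = e := by
          have : z + (-e) + e = 0 + e := by rw [hze]
          simpa using this
        rw [hz2] at hz
        have : e ∈ (parkC m S (List.ofFn π))ᶜ := by
          rw [compl_parkC_eq m r S π hdim]; exact Finset.mem_singleton_self _
        exact (Finset.mem_compl.1 this) hz
    · -- left inverse
      rintro ⟨t, S, π⟩ ha
      simp only [Finset.mem_product, Finset.mem_univ, true_and] at ha
      rw [hT2, Finset.mem_filter] at ha
      obtain ⟨hmem, hzero⟩ := ha
      rw [hfull, Finset.mem_product, Finset.mem_powersetCard_univ] at hmem
      have hdim : S.card + r + 1 = m := by rw [hmem.1, hm, hr]; omega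
      have he0 : emptyOf m r S π = 0 := by
        have h0 : (0 : ZMod m) ∈ (parkC m S (List.ofFn π))ᶜ := Finset.mem_compl.2 hzero
        rw [compl_parkC_eq m r S π hdim, Finset.mem_singleton] at h0
        exact h0.symm
      have herot : emptyOf m r (S.image (· + t)) (fun j => π j + t) = t := by
        rw [emptyOf_rot m r S π t hdim, he0, zero_add]
      refine Prod.ext herot ?_
      show ((S.image (· + t)).image
          (· + (- emptyOf m r (S.image (· + t)) (fun j => π j + t))),
          fun i => (π i + t) + (- emptyOf m r (S.image (· + t)) (fun j => π j + t))) = (S, π)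
      rw [herot]
      refine Prod.ext ?_ ?_
      · simpa using image_add_neg_cancel S t
      · funext i; simp
    · -- right inverse
      rintro ⟨S, π⟩ hb
      simp only [hfull, Finset.mem_product, Finset.mem_univ, and_true, true_and] at hb
      rw [Finset.mem_powersetCard_univ] at hb
      have hdim : S.card + r + 1 = m := by rw [hb, hm, hr]; omega
      set e := emptyOf m r S π with he
      refine Prod.ext ?_ ?_
      · simpa using image_neg_add_cancel S e
      · funext i; simp
  rw [← hcard_full, ← hbij, Finset.card_product, Finset.card_univ, ZMod.card]


open Classical in
lemma sum_PC_eq (n k : ℕ) (hk : 1 ≤ k) (hkn : k ≤ n) :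
    (∑ w ∈ Finset.univ.filter (fun w : Fin k → Fin n => StrictMono w),
        (PC n (fun j : Fin k => (w j : ℕ) + 1)).card)
      = (((Finset.powersetCard k (Finset.univ : Finset (ZMod (n+1)))) ×ˢ
            (Finset.univ : Finset (Fin (n-k) → ZMod (n+1)))).filter
          (fun Sπ => (0 : ZMod (n+1)) ∉ parkC (n+1) Sπ.1 (List.ofFn Sπ.2))).card := by
  classical
  have hn : 1 ≤ n := le_trans hk hkn
  rw [← Finset.card_sigma]
  -- the natural-to-circle coding
  set g : Fin n → ZMod (n+1) := fun x => (((x : ℕ) + 1 : ℕ) : ZMod (n+1)) with hg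
  have hginj : Function.Injective g := by
    intro x y hxy
    have hx : (g x).val = (x : ℕ) + 1 := ZMod.val_cast_of_lt (by omega)
    have hy : (g y).val = (y : ℕ) + 1 := ZMod.val_cast_of_lt (by omega)
    have : (x : ℕ) + 1 = (y : ℕ) + 1 := by rw [← hx, ← hy, hxy]
    exact Fin.ext (by omega)
  have hgne : ∀ x : Fin n, g x ≠ 0 := by
    intro x hx
    have : (g x).val = (x : ℕ) + 1 := ZMod.val_cast_of_lt (by omega)
    rw [hx] at this
    simp at this
  -- key recoding of the park condition
  have hkey : ∀ (w : Fin k → Fin n) (π : Fin (n-k) → Fin n),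
      (park n (Finset.univ.image (fun j => (w j : ℕ) + 1))
        (List.ofFn (fun i => (π i : ℕ) + 1))).isSome = true ↔
      (0 : ZMod (n+1)) ∉ parkC (n+1) (Finset.univ.image (g ∘ w))
        (List.ofFn (g ∘ π)) := by
    intro w π
    rw [park_isSome_iff n _ _ ?_ ?_]
    · rw [Finset.image_image, List.map_ofFn]
      rfl
    · intro x hx
      obtain ⟨j, -, rfl⟩ := Finset.mem_image.1 hx
      exact ⟨by omega, by have : (w j : ℕ) < n := (w j).isLt; omega⟩
    · intro p hp
      rw [List.mem_ofFn] at hp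
      obtain ⟨i, rfl⟩ := hp
      have hlt : (π i : ℕ) < n := (π i).isLt
      show 1 ≤ (π i : ℕ) + 1 ∧ (π i : ℕ) + 1 ≤ n
      omega
  refine Finset.card_bij
    (fun a _ => (Finset.univ.image (g ∘ a.1), g ∘ a.2)) ?_ ?_ ?_
  · -- maps into T2
    rintro ⟨w, π⟩ ha
    rw [Finset.mem_sigma, Finset.mem_filter] at ha
    obtain ⟨⟨-, hw⟩, hπ⟩ := ha
    rw [Finset.mem_filter]
    constructor
    · rw [Finset.mem_product, Finset.mem_powersetCard_univ]
      refine ⟨?_, Finset.mem_univ _⟩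
      rw [Finset.card_image_of_injective _ (hginj.comp hw.injective), Finset.card_univ,
        Fintype.card_fin]
    · rw [PC, Finset.mem_filter] at hπ
      exact (hkey w π).1 hπ.2
  · -- injective
    rintro ⟨w, π⟩ ha ⟨w', π'⟩ ha' he
    rw [Finset.mem_sigma, Finset.mem_filter] at ha ha'
    obtain ⟨⟨-, hw⟩, -⟩ := ha
    obtain ⟨⟨-, hw'⟩, -⟩ := ha'
    rw [Prod.mk.injEq] at he
    have hππ : π = π' := by
      funext i
      exact hginj (congrFun he.2 i)
    have himg : Finset.univ.image w = Finset.univ.image w' := by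
      have h1 : (Finset.univ.image w).image g = (Finset.univ.image w').image g := by
        rw [Finset.image_image, Finset.image_image]
        exact he.1
      exact Finset.image_injective hginj h1
    have hcard : (Finset.univ.image w).card = k := by
      rw [Finset.card_image_of_injective _ hw.injective, Finset.card_univ, Fintype.card_fin]
    have hww : w = w' := by
      have e1 := Finset.orderEmbOfFin_unique hcard (f := w)
        (fun x => Finset.mem_image_of_mem w (Finset.mem_univ x)) hw
      have e2 := Finset.orderEmbOfFin_unique hcard (f := w')
        (fun x => by rw [himg]; exact Finset.mem_image_of_mem w' (Finset.mem_univ x)) hw'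
      rw [e1, e2]
    subst hww
    subst hππ
    rfl
  · -- surjective
    rintro ⟨S, ρ⟩ hb
    rw [Finset.mem_filter, Finset.mem_product, Finset.mem_powersetCard_univ] at hb
    obtain ⟨⟨hScard, -⟩, hzero⟩ := hb
    have hS0 : (0 : ZMod (n+1)) ∉ S := fun h0 =>
      hzero (mem_parkC_of_mem _ _ _ h0)
    have hρ0 : ∀ i, ρ i ≠ 0 := by
      intro i hi
      exact hzero (zero_mem_parkC _ _ _ (Or.inr (by
        rw [List.mem_ofFn]; exact ⟨i, hi⟩)))
    -- decode
    set φ : ZMod (n+1) → Fin n := fun x => ⟨x.val - 1, by have := ZMod.val_lt x; omega⟩ with hφ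
    have hval1 : ∀ x : ZMod (n+1), x ≠ 0 → 1 ≤ x.val := by
      intro x hx
      rcases Nat.eq_zero_or_pos x.val with h | h
      · exact absurd (ZMod.val_injective _ (by rw [h, ZMod.val_zero])) hx
      · exact h
    have hgφ : ∀ x : ZMod (n+1), x ≠ 0 → g (φ x) = x := by
      intro x hx
      have hv : 1 ≤ x.val := hval1 x hx
      show (((x.val - 1 : ℕ) + 1 : ℕ) : ZMod (n+1)) = x
      have : (x.val - 1) + 1 = x.val := by omega
      rw [this]
      simp [ZMod.natCast_val, ZMod.cast_id]
    have hφinj : Set.InjOn φ S := by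
      intro x hx y hy hxy
      have h1 : 1 ≤ x.val := hval1 x (fun he => hS0 (by rwa [he] at hx))
      have h2 : 1 ≤ y.val := hval1 y (fun he => hS0 (by rwa [he] at hy))
      have : x.val - 1 = y.val - 1 := congrArg Fin.val hxy
      exact ZMod.val_injective _ (by omega)
    have hcard : (S.image φ).card = k := by
      rw [Finset.card_image_of_injOn hφinj, hScard]
    set w : Fin k → Fin n := ⇑((S.image φ).orderEmbOfFin hcard) with hw
    have hwmono : StrictMono w := (Finset.orderEmbOfFin _ _).strictMono
    have hwimg : Finset.univ.image w = S.image φ := by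
      ext x
      simp only [Finset.mem_image, Finset.mem_univ, true_and]
      constructor
      · rintro ⟨j, rfl⟩
        have : w j ∈ (↑(S.image φ) : Set (Fin n)) := by
          rw [← Finset.range_orderEmbOfFin (S.image φ) hcard]
          exact Set.mem_range_self j
        exact Finset.mem_image.1 (by exact_mod_cast this)
      · intro hx
        have : x ∈ Set.range w := by
          rw [hw]
          show x ∈ Set.range ⇑((S.image φ).orderEmbOfFin hcard)
          rw [Finset.range_orderEmbOfFin]
          exact_mod_cast Finset.mem_image.2 hx
        obtain ⟨j, hj⟩ := this
        exact ⟨j, hj⟩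
    have hSrec : Finset.univ.image (g ∘ w) = S := by
      rw [← Finset.image_image, hwimg, Finset.image_image]
      rw [show (g ∘ φ) = fun x => g (φ x) from rfl]
      ext x
      simp only [Finset.mem_image]
      constructor
      · rintro ⟨y, hy, rfl⟩
        rw [hgφ y (fun h0 => hS0 (h0 ▸ hy))]
        exact hy
      · intro hx
        exact ⟨x, hx, hgφ x (fun h0 => hS0 (h0 ▸ hx))⟩
    set π : Fin (n - k) → Fin n := fun i => φ (ρ i) with hπdef
    have hρrec : g ∘ π = ρ := by
      funext i
      exact hgφ (ρ i) (hρ0 i)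
    refine ⟨⟨w, π⟩, ?_, ?_⟩
    · rw [Finset.mem_sigma, Finset.mem_filter]
      refine ⟨⟨Finset.mem_univ _, hwmono⟩, ?_⟩
      rw [PC, Finset.mem_filter]
      refine ⟨Finset.mem_univ _, ?_⟩
      rw [hkey w π, hSrec, hρrec]
      exact hzero
    · rw [Prod.mk.injEq]
      exact ⟨hSrec, hρrec⟩

open Classical in
lemma main_count (n k : ℕ) (hk : 1 ≤ k) (hkn : k ≤ n) :
    (n+1) * (∑ w ∈ Finset.univ.filter (fun w : Fin k → Fin n => StrictMono w),
        (PC n (fun j : Fin k => (w j : ℕ) + 1)).card)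
      = ((n+1).choose k) * (n+1)^(n-k) := by
  rw [sum_PC_eq n k hk hkn, rot_count n k hkn]

/-- For fixed `k ≥ 1`, the total number of parking completions over all strictly increasing
`k`-tuples `1 ≤ i_1 < ⋯ < i_k ≤ n` of occupied spots (tuples encoded as strictly monotone
maps `w : Fin k → Fin n`, with spot values `w j + 1`) is asymptotic to
`(n+1)^(n-k) n^(k-1) / k!` as `n → ∞`. -/
theorem sum_card_parkingCompletions_asymptotic (k : ℕ) (hk : 1 ≤ k) :
    Filter.Tendsto
      (fun n : ℕ =>
        (∑ w ∈ Finset.univ.filter (fun w : Fin k → Fin n => StrictMono w),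
            ((PC n (fun j : Fin k => (w j : ℕ) + 1)).card : ℝ))
          / (((n : ℝ) + 1) ^ (n - k) * (n : ℝ) ^ (k - 1) / Nat.factorial k))
      Filter.atTop (nhds 1) := by
  classical
  obtain ⟨K, rfl⟩ : ∃ K, k = K + 1 := ⟨k - 1, by omega⟩
  -- the limit of the explicit product
  have hfac : ∀ c : ℝ, Filter.Tendsto (fun n : ℕ => ((n:ℝ) - c)/n)
      Filter.atTop (nhds 1) := by
    intro c
    have h0 : Filter.Tendsto (fun n : ℕ => 1 - c * (1/(n:ℝ))) Filter.atTop
        (nhds (1 - c * 0)) :=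
      Filter.Tendsto.sub tendsto_const_nhds
        (Filter.Tendsto.mul tendsto_const_nhds tendsto_one_div_atTop_nhds_zero_nat)
    rw [mul_zero, sub_zero] at h0
    apply h0.congr'
    filter_upwards [Filter.eventually_ge_atTop 1] with n hn
    have hne : (n:ℝ) ≠ 0 := by
      have : (1:ℝ) ≤ (n:ℝ) := by exact_mod_cast hn
      linarith
    field_simp
  have hprod_lim : Filter.Tendsto (fun n : ℕ => ∏ j ∈ Finset.range K, ((n:ℝ) - j)/n)
      Filter.atTop (nhds 1) := by
    have := tendsto_finset_prod (Finset.range K)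
      (f := fun (j : ℕ) (n : ℕ) => ((n:ℝ) - j)/n) (x := Filter.atTop)
      (a := fun _ => (1:ℝ)) (fun j _ => hfac j)
    simpa using this
  refine hprod_lim.congr' ?_
  filter_upwards [Filter.eventually_ge_atTop (K+1)] with n hn
  have hn1 : 1 ≤ n := by omega
  have hnR : (1:ℝ) ≤ (n:ℝ) := by exact_mod_cast hn1
  have hnne : (n:ℝ) ≠ 0 := by linarith
  have hn1ne : (n:ℝ) + 1 ≠ 0 := by linarith
  have hAne : ((n:ℝ) + 1) ^ (n - (K+1)) ≠ 0 := pow_ne_zero _ hn1ne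
  have hBne : (n:ℝ) ^ (K + 1 - 1) ≠ 0 := pow_ne_zero _ hnne
  have hCne : ((K+1).factorial : ℝ) ≠ 0 := by
    exact_mod_cast (Nat.factorial_pos (K+1)).ne'
  -- Nat identities
  have hNat : ((K+1).factorial) * ((n+1).choose (K+1))
      = (n+1) * ∏ j ∈ Finset.range K, (n - j) := by
    rw [← Nat.descFactorial_eq_factorial_mul_choose, Nat.succ_descFactorial_succ,
      Nat.descFactorial_eq_prod_range]
  have hmain := main_count n (K+1) (by omega) hn
  -- cast to ℝ
  set Sn : ℕ := ∑ w ∈ Finset.univ.filter (fun w : Fin (K+1) → Fin n => StrictMono w),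
      (PC n (fun j : Fin (K+1) => (w j : ℕ) + 1)).card with hSn
  clear_value Sn
  have hsum_cast : (∑ w ∈ Finset.univ.filter (fun w : Fin (K+1) → Fin n => StrictMono w),
      ((PC n (fun j : Fin (K+1) => (w j : ℕ) + 1)).card : ℝ)) = (Sn : ℝ) := by
    rw [hSn, Nat.cast_sum]
  have hmainR : ((n:ℝ) + 1) * (Sn : ℝ)
      = ((n+1).choose (K+1) : ℝ) * ((n:ℝ) + 1) ^ (n - (K+1)) := by
    have := congrArg (Nat.cast : ℕ → ℝ) hmain
    push_cast at this
    convert this using 2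
  have hcastprod : ((∏ j ∈ Finset.range K, (n - j) : ℕ) : ℝ)
      = ∏ j ∈ Finset.range K, ((n:ℝ) - j) := by
    rw [Nat.cast_prod]
    refine Finset.prod_congr rfl ?_
    intro j hj
    rw [Finset.mem_range] at hj
    rw [Nat.cast_sub (le_of_lt (lt_of_lt_of_le hj (le_trans (Nat.le_succ K) hn)))]
  have hNatR : (((K+1).factorial : ℕ) : ℝ) * ((n+1).choose (K+1) : ℝ)
      = ((n:ℝ) + 1) * ∏ j ∈ Finset.range K, ((n:ℝ) - j) := by
    have := congrArg (Nat.cast : ℕ → ℝ) hNat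
    rw [Nat.cast_mul, Nat.cast_mul, hcastprod] at this
    rw [this]
    push_cast
    ring
  -- finish
  rw [hsum_cast]
  have hKsub : K + 1 - 1 = K := Nat.add_sub_cancel K 1
  simp only [Nat.add_sub_cancel] at hBne ⊢
  have hPB : ∏ j ∈ Finset.range K, ((n:ℝ) - j)/n
      = (∏ j ∈ Finset.range K, ((n:ℝ) - j)) / (n:ℝ)^K := by
    rw [Finset.prod_div_distrib, Finset.prod_const, Finset.card_range]
  have hDne : ((n:ℝ) + 1) ^ (n - (K+1)) * (n:ℝ)^K / ((K+1).factorial : ℝ) ≠ 0 :=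
    div_ne_zero (mul_ne_zero hAne hBne) hCne
  rw [hPB, eq_div_iff hDne]
  -- goal : prod / n^K * (A * n^K / C) = Sn
  have hSval : (Sn : ℝ) = ((n+1).choose (K+1) : ℝ) * ((n:ℝ) + 1) ^ (n - (K+1)) / ((n:ℝ)+1) := by
    rw [eq_div_iff hn1ne]
    linarith [hmainR]
  rw [hSval]
  field_simp
  linear_combination (-1 : ℝ) * hNatR
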